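/- The group presented by generators λ, γ₁, γ₂ with relations γ₁² = e, γ₂² = e, and γ₁γ₂ = γ₂γ₁ is isomorphic to the free product Z * (Z/2Z × Z/2Z). -/

import Mathlib

/-- Generators: 0 = λ (= λ₁₂), 1 = γ₁, 2 = γ₂. -/
def tvp2Rels : Set (FreeGroup (Fin 3)) :=
  {FreeGroup.of 1 ^ 2, FreeGroup.of 2 ^ 2,
   FreeGroup.of 1 * FreeGroup.of 2 * (FreeGroup.of 2 * FreeGroup.of 1)⁻¹}

section aux

/-- Hom from `Multiplicative (ZMod 2)` determined by an element of square one. -/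
def zmod2Hom {G : Type*} [Monoid G] (g : G) (hg : g ^ 2 = 1) :
    Multiplicative (ZMod 2) →* G where
  toFun x := g ^ (Multiplicative.toAdd x).val
  map_one' := by
    show g ^ (Multiplicative.toAdd (1 : Multiplicative (ZMod 2))).val = 1
    have : (Multiplicative.toAdd (1 : Multiplicative (ZMod 2))).val = 0 := by decide
    rw [this, pow_zero]
  map_mul' x y := by
    show g ^ (Multiplicative.toAdd (x * y)).val =
      g ^ (Multiplicative.toAdd x).val * g ^ (Multiplicative.toAdd y).val
    have h : (Multiplicative.toAdd (x * y)).val =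
        ((Multiplicative.toAdd x).val + (Multiplicative.toAdd y).val) % 2 := by
      revert x y; decide
    rw [h, ← pow_eq_pow_mod _ hg, pow_add]

@[simp] theorem zmod2Hom_ofAdd_one {G : Type*} [Monoid G] (g : G) (hg : g ^ 2 = 1) :
    zmod2Hom g hg (Multiplicative.ofAdd 1) = g := by
  show g ^ (1 : ZMod 2).val = g
  rw [show (1 : ZMod 2).val = 1 from rfl, pow_one]

theorem tvp2_rel_one {r : FreeGroup (Fin 3)} (hr : r ∈ tvp2Rels) :
    PresentedGroup.mk tvp2Rels r = 1 :=
  (QuotientGroup.eq_one_iff r).2 (Subgroup.subset_normalClosure hr)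

theorem gamma1_sq : (PresentedGroup.of 1 : PresentedGroup tvp2Rels) ^ 2 = 1 := by
  have := tvp2_rel_one (r := FreeGroup.of 1 ^ 2) (by left; rfl)
  simpa [PresentedGroup.of] using this

theorem gamma2_sq : (PresentedGroup.of 2 : PresentedGroup tvp2Rels) ^ 2 = 1 := by
  have := tvp2_rel_one (r := FreeGroup.of 2 ^ 2) (by right; left; rfl)
  simpa [PresentedGroup.of] using this

theorem gamma_comm :
    Commute (PresentedGroup.of 1 : PresentedGroup tvp2Rels) (PresentedGroup.of 2) := by
  have := tvp2_rel_one
    (r := FreeGroup.of 1 * FreeGroup.of 2 * (FreeGroup.of 2 * FreeGroup.of 1)⁻¹)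
    (by right; right; rfl)
  have h : (PresentedGroup.of 1 * PresentedGroup.of 2 *
      (PresentedGroup.of 2 * PresentedGroup.of 1)⁻¹ : PresentedGroup tvp2Rels) = 1 := by
    simpa [PresentedGroup.of] using this
  have := mul_eq_one_iff_eq_inv.mp h
  rw [inv_inv] at this
  exact this

end aux

/-- ⟨λ, γ₁, γ₂ | γ₁² = γ₂² = e, γ₁γ₂ = γ₂γ₁⟩ ≅ ℤ * (ℤ/2 × ℤ/2). -/
theorem stmt1 :
    Nonempty (PresentedGroup tvp2Rels ≃*
      Monoid.Coprod (Multiplicative ℤ)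
        (Multiplicative (ZMod 2) × Multiplicative (ZMod 2))) := by
  set C := Monoid.Coprod (Multiplicative ℤ)
      (Multiplicative (ZMod 2) × Multiplicative (ZMod 2))
  -- forward map
  set fgen : Fin 3 → C := ![Monoid.Coprod.inl (Multiplicative.ofAdd (1 : ℤ)),
    Monoid.Coprod.inr (Multiplicative.ofAdd (1 : ZMod 2), 1),
    Monoid.Coprod.inr (1, Multiplicative.ofAdd (1 : ZMod 2))] with hfgen
  have hrels : ∀ r ∈ tvp2Rels, FreeGroup.lift fgen r = 1 := by
    rintro r (rfl | rfl | rfl) <;>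
      simp only [map_mul, map_pow, map_inv, FreeGroup.lift_apply_of, hfgen, Matrix.cons_val] <;>
      norm_num [← map_pow, ← map_mul, ← map_inv] <;>
      rw [← map_one (Monoid.Coprod.inr (M := Multiplicative ℤ))] <;> congr 1 <;> decide
  set φ : PresentedGroup tvp2Rels →* C := PresentedGroup.toGroup hrels with hφ
  -- backward map
  set g₂hom : Multiplicative (ZMod 2) × Multiplicative (ZMod 2) →* PresentedGroup tvp2Rels :=
    MonoidHom.noncommCoprod (zmod2Hom _ gamma1_sq) (zmod2Hom _ gamma2_sq)
      (fun m n => (gamma_comm.pow_pow _ _)) with hg2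
  set ψ : C →* PresentedGroup tvp2Rels :=
    Monoid.Coprod.lift (zpowersHom _ (PresentedGroup.of 0)) g₂hom with hψ
  refine ⟨MonoidHom.toMulEquiv φ ψ ?_ ?_⟩
  · -- ψ ∘ φ = id on PresentedGroup
    apply PresentedGroup.ext
    intro x
    fin_cases x <;>
      simp [hφ, hψ, hg2, hfgen, PresentedGroup.toGroup.of, zmod2Hom,
        Monoid.Coprod.lift_apply_inl, Monoid.Coprod.lift_apply_inr,
        show (1 : ZMod 2).val = 1 from rfl]
  · -- φ ∘ ψ = id on C
    apply Monoid.Coprod.hom_ext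
    · apply MonoidHom.ext_mint
      simp [hφ, hψ, PresentedGroup.toGroup.of, Monoid.Coprod.lift_apply_inl, hfgen]
    · apply MonoidHom.ext
      intro x
      have hx : x = (1, 1) ∨ x = (Multiplicative.ofAdd 1, 1) ∨
          x = (1, Multiplicative.ofAdd 1) ∨
          x = (Multiplicative.ofAdd 1, Multiplicative.ofAdd 1) := by
        revert x; decide
      rcases hx with rfl | rfl | rfl | rfl <;>
        simp [hφ, hψ, hg2, hfgen, PresentedGroup.toGroup.of, zmod2Hom,
          Monoid.Coprod.lift_apply_inr, MonoidHom.noncommCoprod_apply, map_mul,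
          show (1 : ZMod 2).val = 1 from rfl] <;>
        simp [hfgen, ← map_mul, ← Prod.one_eq_mk]
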